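/- Fix α ≥ 0 and δ ∈ (0, π]. Let a, b be nonzero vectors in ℝ² whose angle θ(a,b) = arccos(⟨a,b⟩/(‖a‖‖b‖)) satisfies θ(a,b) ≤ π − δ, and let u ∈ ℝ² be a unit vector. Then ∫_{y ∈ ℝ²} 1{⟨a,y⟩>0} · 1{⟨b,y⟩>0} · 1{‖y‖≤α} · ⟨u,y⟩² dy ≥ (α⁴ / (8√2)) · sin³(δ/4). -/

import Mathlib

set_option maxHeartbeats 1000000

open Real MeasureTheory
open scoped RealInnerProductSpace

noncomputable section StmtAux

lemma st5_polar (x y : ℝ) (h : x^2 + y^2 = 1) : ∃ φ, Real.cos φ = x ∧ Real.sin φ = y := by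
  have hx : -1 ≤ x ∧ x ≤ 1 := abs_le.mp (abs_le_one_iff_mul_self_le_one.mpr (by nlinarith))
  rcases le_or_gt 0 y with hy | hy
  · refine ⟨Real.arccos x, Real.cos_arccos hx.1 hx.2, ?_⟩
    rw [Real.sin_arccos, show (1:ℝ) - x^2 = y^2 by linarith]
    exact Real.sqrt_sq hy
  · refine ⟨-Real.arccos x, by rw [Real.cos_neg]; exact Real.cos_arccos hx.1 hx.2, ?_⟩
    rw [Real.sin_neg, Real.sin_arccos, show (1:ℝ) - x^2 = y^2 by linarith]
    rw [Real.sqrt_sq_eq_abs, abs_of_neg hy]; ring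

lemma st5_angle (δ φa φb φu : ℝ) (hδ0 : 0 < δ) (hδπ : δ ≤ π)
    (h : Real.arccos (Real.cos (φa - φb)) ≤ π - δ) :
    ∃ φ, Real.sin (δ/4) ≤ Real.cos (φ - φa) ∧ Real.sin (δ/4) ≤ Real.cos (φ - φb) ∧
      Real.sin (δ/4) ≤ |Real.cos (φ - φu)| := by
  set Δ := Real.arccos (Real.cos (φa - φb)) with hΔdef
  have hΔ0 : 0 ≤ Δ := Real.arccos_nonneg _
  have hcosΔ : Real.cos Δ = Real.cos (φa - φb) :=
    Real.cos_arccos (neg_one_le_cos _) (cos_le_one _)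
  have hcos2 : Real.cos ((φa - φb)/2) ^ 2 = Real.cos (Δ/2) ^ 2 := by
    have g1 := Real.cos_sq ((φa - φb)/2)
    have g2 := Real.cos_sq (Δ/2)
    rw [show 2*((φa - φb)/2) = φa - φb by ring] at g1
    rw [show 2*(Δ/2) = Δ by ring] at g2
    rw [g1, g2, hcosΔ]
  have hcosΔ2 : 0 ≤ Real.cos (Δ/2) := Real.cos_nonneg_of_mem_Icc ⟨by linarith, by linarith⟩
  obtain ⟨μ, hμa, hμb⟩ :
      ∃ μ, Real.cos (μ - φa) = Real.cos (Δ/2) ∧ Real.cos (μ - φb) = Real.cos (Δ/2) := by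
    rcases le_or_gt 0 (Real.cos ((φa - φb)/2)) with hc | hc
    · refine ⟨(φa + φb)/2, ?_, ?_⟩
      · rw [show (φa + φb)/2 - φa = -((φa - φb)/2) by ring, Real.cos_neg]; nlinarith
      · rw [show (φa + φb)/2 - φb = (φa - φb)/2 by ring]; nlinarith
    · refine ⟨(φa + φb)/2 + π, ?_, ?_⟩
      · rw [show (φa + φb)/2 + π - φa = -((φa - φb)/2) + π by ring, Real.cos_add_pi,
          Real.cos_neg]; nlinarith
      · rw [show (φa + φb)/2 + π - φb = (φa - φb)/2 + π by ring, Real.cos_add_pi]; nlinarith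
  have hs4 : 0 ≤ Real.sin (δ/4) := Real.sin_nonneg_of_nonneg_of_le_pi (by linarith) (by linarith)
  have key : ∀ ψ τ, Real.cos ψ = Real.cos (Δ/2) → (τ = δ/4 ∨ τ = -(δ/4)) →
      Real.sin (δ/4) ≤ Real.cos (ψ + τ) := by
    intro ψ τ hψ hτ
    have hsψ : |Real.sin ψ| = Real.sin (Δ/2) := by
      have h1 : Real.sin ψ ^ 2 = Real.sin (Δ/2) ^ 2 := by
        have e1 := Real.sin_sq_add_cos_sq ψ
        have e2 := Real.sin_sq_add_cos_sq (Δ/2)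
        nlinarith
      have hsΔ2 : 0 ≤ Real.sin (Δ/2) :=
        Real.sin_nonneg_of_nonneg_of_le_pi (by linarith) (by linarith)
      calc |Real.sin ψ| = Real.sqrt (Real.sin ψ ^ 2) := (Real.sqrt_sq_eq_abs _).symm
        _ = Real.sqrt (Real.sin (Δ/2) ^ 2) := by rw [h1]
        _ = Real.sin (Δ/2) := Real.sqrt_sq hsΔ2
    have hcτ : Real.cos τ = Real.cos (δ/4) := by
      rcases hτ with rfl | rfl
      · rfl
      · rw [Real.cos_neg]
    have hsτ : |Real.sin τ| = Real.sin (δ/4) := by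
      rcases hτ with rfl | rfl
      · exact abs_of_nonneg hs4
      · rw [Real.sin_neg, abs_neg]; exact abs_of_nonneg hs4
    have hprod : Real.sin ψ * Real.sin τ ≤ Real.sin (Δ/2) * Real.sin (δ/4) := by
      calc Real.sin ψ * Real.sin τ ≤ |Real.sin ψ * Real.sin τ| := le_abs_self _
        _ = |Real.sin ψ| * |Real.sin τ| := abs_mul _ _
        _ = Real.sin (Δ/2) * Real.sin (δ/4) := by rw [hsψ, hsτ]
    have hstep : Real.cos (Δ/2 + δ/4) ≤ Real.cos (ψ + τ) := by
      rw [Real.cos_add, Real.cos_add, hψ, hcτ]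
      linarith
    have hmono : Real.cos (π/2 - δ/4) ≤ Real.cos (Δ/2 + δ/4) :=
      Real.cos_le_cos_of_nonneg_of_le_pi (by linarith) (by linarith) (by linarith)
    rw [Real.cos_pi_div_two_sub] at hmono
    linarith
  have hcδ2 : 0 ≤ Real.cos (δ/2) := Real.cos_nonneg_of_mem_Icc ⟨by linarith, by linarith⟩
  have hsum : Real.sin (δ/4) ^ 2 ≤ Real.cos (μ - φu + δ/4) ^ 2 ∨
      Real.sin (δ/4) ^ 2 ≤ Real.cos (μ - φu + -(δ/4)) ^ 2 := by
    by_contra hcon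
    push_neg at hcon
    obtain ⟨h1, h2⟩ := hcon
    have e1 : Real.cos (μ - φu + δ/4) =
        Real.cos (μ - φu) * Real.cos (δ/4) - Real.sin (μ - φu) * Real.sin (δ/4) :=
      Real.cos_add _ _
    have e2 : Real.cos (μ - φu + -(δ/4)) =
        Real.cos (μ - φu) * Real.cos (δ/4) + Real.sin (μ - φu) * Real.sin (δ/4) := by
      rw [Real.cos_add, Real.cos_neg, Real.sin_neg]; ring
    have e3 : Real.cos (δ/2) = Real.cos (δ/4) ^ 2 - Real.sin (δ/4) ^ 2 := by
      rw [show δ/2 = 2 * (δ/4) by ring, Real.cos_two_mul']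
    have e4 := Real.sin_sq_add_cos_sq (μ - φu)
    have e5 := Real.sin_sq_add_cos_sq (δ/4)
    rw [e1] at h1
    rw [e2] at h2
    nlinarith [mul_nonneg (sq_nonneg (Real.cos (μ - φu))) hcδ2,
      sq_nonneg (Real.sin (μ - φu) * Real.sin (δ/4))]
  have habs : ∀ x : ℝ, Real.sin (δ/4) ^ 2 ≤ x ^ 2 → Real.sin (δ/4) ≤ |x| := by
    intro x hx
    calc Real.sin (δ/4) = Real.sqrt (Real.sin (δ/4) ^ 2) := (Real.sqrt_sq hs4).symm
      _ ≤ Real.sqrt (x ^ 2) := Real.sqrt_le_sqrt hx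
      _ = |x| := Real.sqrt_sq_eq_abs _
  rcases hsum with hc | hc
  · refine ⟨μ + δ/4, ?_, ?_, ?_⟩
    · rw [show μ + δ/4 - φa = (μ - φa) + δ/4 by ring]; exact key _ _ hμa (Or.inl rfl)
    · rw [show μ + δ/4 - φb = (μ - φb) + δ/4 by ring]; exact key _ _ hμb (Or.inl rfl)
    · rw [show μ + δ/4 - φu = (μ - φu) + δ/4 by ring]; exact habs _ hc
  · refine ⟨μ + -(δ/4), ?_, ?_, ?_⟩
    · rw [show μ + -(δ/4) - φa = (μ - φa) + -(δ/4) by ring]; exact key _ _ hμa (Or.inr rfl)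
    · rw [show μ + -(δ/4) - φb = (μ - φb) + -(δ/4) by ring]; exact key _ _ hμb (Or.inr rfl)
    · rw [show μ + -(δ/4) - φu = (μ - φu) + -(δ/4) by ring]; exact habs _ hc

lemma st5_poly (e f g a b : ℝ) :
    ∫ x in a..b, (e*x^2 + f*x + g) = e*(b^3-a^3)/3 + f*(b^2-a^2)/2 + g*(b-a) := by
  have h1 : IntervalIntegrable (fun x : ℝ => e*x^2) volume a b :=
    (Continuous.intervalIntegrable (by continuity) a b)
  have h2 : IntervalIntegrable (fun x : ℝ => f*x) volume a b :=
    (Continuous.intervalIntegrable (by continuity) a b)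
  have h3 : IntervalIntegrable (fun x : ℝ => g) volume a b :=
    (Continuous.intervalIntegrable (by continuity) a b)
  rw [intervalIntegral.integral_add (h1.add h2) h3, intervalIntegral.integral_add h1 h2,
    intervalIntegral.integral_const_mul, intervalIntegral.integral_const_mul,
    integral_pow, integral_id, intervalIntegral.integral_const]
  push_cast
  rw [smul_eq_mul]
  ring

lemma st5_int (p q s₀ S w : ℝ) (hS : s₀ ≤ S) (hw : 0 ≤ w) :
    2*w*p^2*(S^3 - s₀^3)/3 ≤
      ∫ x in Set.Icc s₀ S ×ˢ Set.Ioo (-w) w, (p * x.1 + q * x.2)^2 := by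
  have hcont : Continuous (fun x : ℝ×ℝ => (p * x.1 + q * x.2)^2) := by continuity
  have hint : IntegrableOn (fun x : ℝ×ℝ => (p * x.1 + q * x.2)^2)
      (Set.Icc s₀ S ×ˢ Set.Ioo (-w) w) := by
    apply (hcont.continuousOn.integrableOn_compact
      ((isCompact_Icc (a := s₀) (b := S)).prod (isCompact_Icc (a := -w) (b := w)))).mono_set
    exact Set.prod_mono subset_rfl Set.Ioo_subset_Icc_self
  rw [show (∫ x in Set.Icc s₀ S ×ˢ Set.Ioo (-w) w, (p * x.1 + q * x.2)^2) =
      ∫ x in Set.Icc s₀ S, ∫ y in Set.Ioo (-w) w, (p * x + q * y)^2 by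
    rw [MeasureTheory.Measure.volume_eq_prod]
    exact setIntegral_prod _ (by rwa [← MeasureTheory.Measure.volume_eq_prod])]
  have inner_eq : ∀ x : ℝ, (∫ y in Set.Ioo (-w) w, (p * x + q * y)^2)
      = (2*w*p^2) * x^2 + q^2*(2*w^3/3) := by
    intro x
    rw [← integral_Ioc_eq_integral_Ioo, ← intervalIntegral.integral_of_le (by linarith : -w ≤ w)]
    rw [show (fun y : ℝ => (p * x + q * y)^2)
        = fun y : ℝ => q^2*y^2 + (2*p*x*q)*y + (p*x)^2 from funext fun y => by ring]
    rw [st5_poly]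
    ring
  rw [setIntegral_congr_fun measurableSet_Icc (fun x _ => inner_eq x)]
  rw [show (∫ x in Set.Icc s₀ S, ((2*w*p^2) * x^2 + q^2*(2*w^3/3)))
      = ∫ x in s₀..S, ((2*w*p^2) * x^2 + 0*x + q^2*(2*w^3/3)) by
    rw [intervalIntegral.integral_of_le hS, integral_Icc_eq_integral_Ioc]
    congr 1; ext x; ring]
  rw [st5_poly]
  have h1 : (0:ℝ) ≤ q^2*(2*w^3/3)*(S - s₀) :=
    mul_nonneg (mul_nonneg (sq_nonneg q) (by positivity)) (by linarith)
  linarith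

def st5_e (φ : ℝ) : EuclideanSpace ℝ (Fin 2) :=
  (WithLp.equiv 2 (Fin 2 → ℝ)).symm ![Real.cos φ, Real.sin φ]

def st5_e' (φ : ℝ) : EuclideanSpace ℝ (Fin 2) :=
  (WithLp.equiv 2 (Fin 2 → ℝ)).symm ![-Real.sin φ, Real.cos φ]

lemma st5_inner (x y : EuclideanSpace ℝ (Fin 2)) : ⟪x,y⟫ = x 0 * y 0 + x 1 * y 1 := by
  simp [PiLp.inner_apply, Fin.sum_univ_two, RCLike.inner_apply, conj_trivial]
  ring

lemma st5_norm (x : EuclideanSpace ℝ (Fin 2)) : ‖x‖ = Real.sqrt ((x 0)^2 + (x 1)^2) := by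
  rw [EuclideanSpace.norm_eq]
  simp [Fin.sum_univ_two, Real.norm_eq_abs, sq_abs]

lemma st5_orth (φ : ℝ) : Orthonormal ℝ ![st5_e φ, st5_e' φ] := by
  rw [orthonormal_iff_ite]
  intro i j
  have h := Real.sin_sq_add_cos_sq φ
  fin_cases i <;> fin_cases j <;>
    simp [st5_inner, st5_e, st5_e', st5_norm] <;> nlinarith

def st5_B (φ : ℝ) : OrthonormalBasis (Fin 2) ℝ (EuclideanSpace ℝ (Fin 2)) :=
  (basisOfLinearIndependentOfCardEqFinrank (st5_orth φ).linearIndependent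
    (by simp)).toOrthonormalBasis (by
      rw [coe_basisOfLinearIndependentOfCardEqFinrank]
      exact st5_orth φ)

lemma st5_hB (φ : ℝ) : ⇑(st5_B φ) = ![st5_e φ, st5_e' φ] := by
  rw [st5_B, Module.Basis.coe_toOrthonormalBasis, coe_basisOfLinearIndependentOfCardEqFinrank]

def st5_G (φ : ℝ) : (ℝ × ℝ) ≃ᵐ EuclideanSpace ℝ (Fin 2) :=
  ((MeasurableEquiv.finTwoArrow (α := ℝ)).symm.trans
    (((MeasurableEquiv.toLp 2 (Fin 2 → ℝ))).trans
      (st5_B φ).repr.symm.toHomeomorph.toMeasurableEquiv))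

lemma st5_Gmp (φ : ℝ) : MeasurePreserving (st5_G φ) volume volume := by
  have h3 := (st5_B φ).measurePreserving_repr_symm
  have h2 := (EuclideanSpace.volume_preserving_symm_measurableEquiv_toLp (Fin 2)).symm
  have h1 := (volume_preserving_finTwoArrow ℝ).symm
  exact (h3.comp (h2.comp h1))

lemma st5_Geval (φ : ℝ) (x : EuclideanSpace ℝ (Fin 2)) (s t : ℝ) :
    ⟪x, st5_G φ (s, t)⟫ = ⟪st5_e φ, x⟫ * s + ⟪st5_e' φ, x⟫ * t := by
  have hy : st5_G φ (s, t)
      = (st5_B φ).repr.symm ((MeasurableEquiv.toLp 2 (Fin 2 → ℝ)) ![s, t]) := rfl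
  set y : EuclideanSpace ℝ (Fin 2) := (MeasurableEquiv.toLp 2 (Fin 2 → ℝ)) ![s, t]
  have h1 := (st5_B φ).repr.inner_map_map x ((st5_B φ).repr.symm y)
  rw [LinearIsometryEquiv.apply_symm_apply] at h1
  rw [hy, ← h1, st5_inner]
  rw [OrthonormalBasis.repr_apply_apply, OrthonormalBasis.repr_apply_apply, st5_hB]
  have hy0 : y 0 = s := rfl
  have hy1 : y 1 = t := rfl
  rw [hy0, hy1]
  simp

lemma st5_Gnorm (φ : ℝ) (s t : ℝ) : ‖st5_G φ (s, t)‖ = Real.sqrt (s^2 + t^2) := by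
  have hy : st5_G φ (s, t)
      = (st5_B φ).repr.symm ((MeasurableEquiv.toLp 2 (Fin 2 → ℝ)) ![s, t]) := rfl
  rw [hy, LinearIsometryEquiv.norm_map, EuclideanSpace.norm_eq]
  simp [Fin.sum_univ_two, Real.norm_eq_abs, sq_abs]


lemma st5_sigma_sq (δ : ℝ) (h0 : 0 < δ) (hπ : δ ≤ π) : Real.sin (δ/4)^2 ≤ 1/2 := by
  have h1 : Real.cos (δ/2) = Real.cos (δ/4)^2 - Real.sin (δ/4)^2 := by
    rw [show δ/2 = 2*(δ/4) by ring, Real.cos_two_mul']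
  have h2 : 0 ≤ Real.cos (δ/2) :=
    Real.cos_nonneg_of_mem_Icc ⟨by linarith [Real.pi_pos], by linarith⟩
  nlinarith [Real.sin_sq_add_cos_sq (δ/4)]

lemma st5_ballbound (α σ s t : ℝ) (hα : 0 < α) (hσsq : σ^2 ≤ 1/2)
    (hsl : α/2 ≤ s) (hsr : s ≤ α*(9/10)) (ht2 : t^2 ≤ (α*σ/2)^2) :
    s^2 + t^2 ≤ α^2 := by nlinarith [sq_nonneg α, sq_nonneg σ]

lemma st5_numeric (α σ p : ℝ) (hα : 0 ≤ α) (hσ0 : 0 < σ) (hp2 : σ^2 ≤ p^2) :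
    α^4/(8*Real.sqrt 2) * σ^3 ≤ 2*(α*σ/2)*p^2*((α*(9/10))^3 - (α/2)^3)/3 := by
  set X := Real.sqrt 2 with hXdef
  have hX2 : X^2 = 2 := Real.sq_sqrt (by norm_num)
  have hX0 : 0 < X := Real.sqrt_pos.mpr (by norm_num)
  have hX15 : X ≤ 3/2 := by nlinarith
  have hC : 0 ≤ α^4 * σ^3 :=
    mul_nonneg (pow_nonneg hα 4) (le_of_lt (pow_pos hσ0 3))
  have hL : α^4/(8*X) * σ^3 = α^4*σ^3*X/16 := by
    rw [div_mul_eq_mul_div, div_eq_div_iff (by positivity) (by norm_num)]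
    linear_combination (-8*α^4*σ^3)*hX2
  have hR : 2*(α*σ/2)*p^2*((α*(9/10))^3 - (α/2)^3)/3 = (151/750) * (α^4 * σ) * p^2 := by
    ring
  have hRge : (151/750) * (α^4 * σ^3) ≤ (151/750) * (α^4 * σ) * p^2 := by
    have g1 : 0 ≤ α^4 * σ := mul_nonneg (pow_nonneg hα 4) (le_of_lt hσ0)
    nlinarith
  have hLle : α^4*σ^3*X/16 ≤ (3/32) * (α^4*σ^3) := by
    have g1 : α^4*σ^3*X ≤ α^4*σ^3*(3/2) := mul_le_mul_of_nonneg_left hX15 hC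
    linarith
  rw [hL, hR]
  linarith


end StmtAux

theorem stmt_5 (α δ : ℝ) (hα : 0 ≤ α) (hδ : δ ∈ Set.Ioc 0 π)
    (a b u : EuclideanSpace ℝ (Fin 2)) (ha : a ≠ 0) (hb : b ≠ 0)
    (hθ : Real.arccos (⟪a, b⟫ / (‖a‖ * ‖b‖)) ≤ π - δ) (hu : ‖u‖ = 1) :
    (∫ y in {y : EuclideanSpace ℝ (Fin 2) | 0 < ⟪a, y⟫ ∧ 0 < ⟪b, y⟫ ∧ ‖y‖ ≤ α},
        ⟪u, y⟫ ^ 2) ≥ α ^ 4 / (8 * Real.sqrt 2) * (Real.sin (δ / 4)) ^ 3 := by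
  obtain ⟨hδ0, hδπ⟩ := hδ
  rcases eq_or_lt_of_le hα with hα0 | hα0
  · rw [← hα0]
    have h0 : (0:ℝ)^4 / (8 * Real.sqrt 2) * (Real.sin (δ/4))^3 = 0 := by norm_num
    rw [h0]
    exact integral_nonneg fun y => by positivity
  · -- main case
    have hra : (0:ℝ) < ‖a‖ := norm_pos_iff.mpr ha
    have hrb : (0:ℝ) < ‖b‖ := norm_pos_iff.mpr hb
    have hnormsq : ∀ x : EuclideanSpace ℝ (Fin 2), ‖x‖^2 = (x 0)^2 + (x 1)^2 := by
      intro x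
      rw [st5_norm, Real.sq_sqrt (by positivity)]
    obtain ⟨φa, hφac, hφas⟩ := st5_polar (a 0 / ‖a‖) (a 1 / ‖a‖)
      (by field_simp <;> linarith [hnormsq a])
    obtain ⟨φb, hφbc, hφbs⟩ := st5_polar (b 0 / ‖b‖) (b 1 / ‖b‖)
      (by field_simp <;> linarith [hnormsq b])
    obtain ⟨φu, hφuc, hφus⟩ := st5_polar (u 0) (u 1)
      (by have := hnormsq u; rw [hu] at this; linarith)
    have ha0 : a 0 = ‖a‖ * Real.cos φa := by rw [hφac]; field_simp
    have ha1 : a 1 = ‖a‖ * Real.sin φa := by rw [hφas]; field_simp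
    have hb0 : b 0 = ‖b‖ * Real.cos φb := by rw [hφbc]; field_simp
    have hb1 : b 1 = ‖b‖ * Real.sin φb := by rw [hφbs]; field_simp
    have habθ : Real.arccos (Real.cos (φa - φb)) ≤ π - δ := by
      have h1 : ⟪a,b⟫ / (‖a‖ * ‖b‖) = Real.cos (φa - φb) := by
        rw [st5_inner, ha0, ha1, hb0, hb1, Real.cos_sub]
        field_simp
      rwa [h1] at hθ
    obtain ⟨φ, hca, hcb, hcu⟩ := st5_angle δ φa φb φu hδ0 hδπ habθ
    set σ := Real.sin (δ/4) with hσdef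
    have hσ0 : 0 < σ := Real.sin_pos_of_pos_of_lt_pi (by linarith) (by linarith [Real.pi_pos])
    have hσsq : σ^2 ≤ 1/2 := st5_sigma_sq δ hδ0 hδπ
    -- inner products with e and e'
    have he0 : (st5_e φ) 0 = Real.cos φ := rfl
    have he1 : (st5_e φ) 1 = Real.sin φ := rfl
    have he'0 : (st5_e' φ) 0 = -Real.sin φ := rfl
    have he'1 : (st5_e' φ) 1 = Real.cos φ := rfl
    have hea : ⟪st5_e φ, a⟫ = ‖a‖ * Real.cos (φ - φa) := by
      rw [st5_inner, he0, he1, ha0, ha1, Real.cos_sub]; ring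
    have heb : ⟪st5_e φ, b⟫ = ‖b‖ * Real.cos (φ - φb) := by
      rw [st5_inner, he0, he1, hb0, hb1, Real.cos_sub]; ring
    have heu : ⟪st5_e φ, u⟫ = Real.cos (φ - φu) := by
      rw [st5_inner, he0, he1, ← hφuc, ← hφus, Real.cos_sub]
    have he'n : ‖st5_e' φ‖ = 1 := by
      rw [st5_norm, he'0, he'1,
        show (-Real.sin φ)^2 + (Real.cos φ)^2 = 1 by
          have := Real.sin_sq_add_cos_sq φ; nlinarith]
      exact Real.sqrt_one
    have he'a : |⟪st5_e' φ, a⟫| ≤ ‖a‖ := by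
      have h1 := abs_real_inner_le_norm (st5_e' φ) a
      rwa [he'n, one_mul] at h1
    have he'b : |⟪st5_e' φ, b⟫| ≤ ‖b‖ := by
      have h1 := abs_real_inner_le_norm (st5_e' φ) b
      rwa [he'n, one_mul] at h1
    obtain ⟨p, hpdef⟩ : ∃ x, ⟪st5_e φ, u⟫ = x := ⟨_, rfl⟩
    obtain ⟨q, hqdef⟩ : ∃ x, ⟪st5_e' φ, u⟫ = x := ⟨_, rfl⟩
    rw [hpdef] at heu
    have hp : σ ≤ |p| := by rw [heu]; exact hcu
    set s1 := α/2 with hs1def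
    set s2 := α*(9/10) with hs2def
    set w := α*σ/2 with hwdef
    have hw0 : 0 < w := by
      have := mul_pos hα0 hσ0
      rw [hwdef]; linarith
    set K := Set.Icc s1 s2 ×ˢ Set.Ioo (-w) w with hKdef
    set S := {y : EuclideanSpace ℝ (Fin 2) | 0 < ⟪a, y⟫ ∧ 0 < ⟪b, y⟫ ∧ ‖y‖ ≤ α} with hSdef
    have hsub : st5_G φ '' K ⊆ S := by
      rintro _ ⟨⟨s, t⟩, ⟨⟨hsl, hsr⟩, htl, htr⟩, rfl⟩
      have habst : |t| < w := abs_lt.mpr ⟨htl, htr⟩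
      have hs0 : 0 < s := by linarith
      have hkey : ∀ z : EuclideanSpace ℝ (Fin 2), ‖z‖ * σ ≤ ⟪st5_e φ, z⟫ →
          |⟪st5_e' φ, z⟫| ≤ ‖z‖ → 0 < ‖z‖ → 0 < ⟪z, st5_G φ (s, t)⟫ := by
        intro z h1 h2 h3
        rw [st5_Geval]
        have e1 : ‖z‖ * σ * s ≤ ⟪st5_e φ, z⟫ * s := mul_le_mul_of_nonneg_right h1 (le_of_lt hs0)
        have e2 : -(‖z‖ * |t|) ≤ ⟪st5_e' φ, z⟫ * t := by
          have g1 := neg_abs_le (⟪st5_e' φ, z⟫ * t)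
          have g2 : |⟪st5_e' φ, z⟫ * t| ≤ ‖z‖ * |t| := by
            rw [abs_mul]; exact mul_le_mul_of_nonneg_right h2 (abs_nonneg t)
          linarith
        have e3 : ‖z‖ * |t| < ‖z‖ * w := mul_lt_mul_of_pos_left habst h3
        have e4 : ‖z‖ * σ * s1 ≤ ‖z‖ * σ * s := by
          apply mul_le_mul_of_nonneg_left hsl
          exact mul_nonneg (le_of_lt h3) (le_of_lt hσ0)
        have e5 : ‖z‖ * σ * s1 = ‖z‖ * w := by rw [hwdef, hs1def]; ring
        linarith
      refine ⟨?_, ?_, ?_⟩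
      · exact hkey a (by rw [hea]; exact mul_le_mul_of_nonneg_left hca (le_of_lt hra)) he'a hra
      · exact hkey b (by rw [heb]; exact mul_le_mul_of_nonneg_left hcb (le_of_lt hrb)) he'b hrb
      · show ‖st5_G φ (s, t)‖ ≤ α
        rw [st5_Gnorm]
        have ht2 : t^2 ≤ w^2 := sq_le_sq' (le_of_lt htl) (le_of_lt htr)
        rw [hwdef] at ht2
        have hsum : s^2 + t^2 ≤ α^2 := st5_ballbound α σ s t hα0 hσsq hsl (by rw [hs2def] at hsr; exact hsr) ht2
        calc Real.sqrt (s^2 + t^2) ≤ Real.sqrt (α^2) := Real.sqrt_le_sqrt hsum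
          _ = α := Real.sqrt_sq (le_of_lt hα0)
    -- integrability
    have hfc : Continuous (fun y : EuclideanSpace ℝ (Fin 2) => ⟪u, y⟫^2) :=
      (continuous_const.inner continuous_id).pow 2
    have hfi : IntegrableOn (fun y : EuclideanSpace ℝ (Fin 2) => ⟪u, y⟫^2) S := by
      apply ((hfc.continuousOn).integrableOn_compact
        (isCompact_closedBall (0 : EuclideanSpace ℝ (Fin 2)) α)).mono_set
      intro y hy
      exact mem_closedBall_zero_iff.mpr hy.2.2
    have step1 : (∫ y in st5_G φ '' K, ⟪u, y⟫^2) ≤ ∫ y in S, ⟪u, y⟫^2 :=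
      setIntegral_mono_set hfi (Filter.Eventually.of_forall fun y => by positivity)
        (HasSubset.Subset.eventuallyLE hsub)
    have step2 : (∫ y in st5_G φ '' K, ⟪u, y⟫^2)
        = ∫ st in K, ⟪u, st5_G φ st⟫^2 :=
      (st5_Gmp φ).setIntegral_image_emb (st5_G φ).measurableEmbedding _ K
    have step3 : (∫ st in K, ⟪u, st5_G φ st⟫^2)
        = ∫ st in K, (p * st.1 + q * st.2)^2 := by
      apply setIntegral_congr_fun (measurableSet_Icc.prod measurableSet_Ioo)
      rintro ⟨s, t⟩ _
      show ⟪u, st5_G φ (s, t)⟫^2 = (p * s + q * t)^2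
      rw [st5_Geval, hpdef, hqdef]
    have step4 : 2*w*p^2*(s2^3 - s1^3)/3 ≤ ∫ st in K, (p * st.1 + q * st.2)^2 :=
      st5_int p q s1 s2 w (by rw [hs1def, hs2def]; linarith) (le_of_lt hw0)
    -- numeric final bound
    have hp2 : σ^2 ≤ p^2 := by
      have h1 := pow_le_pow_left₀ (le_of_lt hσ0) hp 2
      rwa [sq_abs] at h1
    have hfinal : α^4/(8*Real.sqrt 2) * σ^3 ≤ 2*w*p^2*(s2^3 - s1^3)/3 := by
      rw [hwdef, hs1def, hs2def]
      exact st5_numeric α σ p hα hσ0 hp2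
    rw [ge_iff_le]
    calc α^4/(8*Real.sqrt 2) * σ^3 ≤ 2*w*p^2*(s2^3 - s1^3)/3 := hfinal
      _ ≤ ∫ st in K, (p * st.1 + q * st.2)^2 := step4
      _ = ∫ st in K, ⟪u, st5_G φ st⟫^2 := step3.symm
      _ = ∫ y in st5_G φ '' K, ⟪u, y⟫^2 := step2.symm
      _ ≤ ∫ y in S, ⟪u, y⟫^2 := step1
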